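/- arXiv:1506.06361 — 2 statements merged into one kernel-verified Lean document; each statement's English description precedes it below -/
import Mathlib

section
/- Let n ≥ 1 and let X_n = {(σ₁,σ₂) ∈ S_n × S_n : ⟨σ₁,σ₂⟩ acts transitively on {1,…,n}}. Consider the action of the group S_{n-1} = {π ∈ S_n : π(n) = n} on X_n by coordinate-wise conjugation. Then every orbit of this action has exactly (n-1)! elements. -/
/-- the orbit of a transitive pair `(σ₁,σ₂)` under coordinate-wise
conjugation by permutations fixing `n` has exactly `(n-1)!` elements. -/
theorem stmt2 (n : ℕ) (hn : 1 ≤ n) (σ₁ σ₂ : Equiv.Perm (Fin n))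
    (htrans : ∀ x y : Fin n,
      ∃ g ∈ Subgroup.closure ({σ₁, σ₂} : Set (Equiv.Perm (Fin n))), g x = y) :
    Set.ncard { p : Equiv.Perm (Fin n) × Equiv.Perm (Fin n) |
      ∃ π : Equiv.Perm (Fin n), π ⟨n - 1, by omega⟩ = ⟨n - 1, by omega⟩ ∧
        p = (π * σ₁ * π⁻¹, π * σ₂ * π⁻¹) } = Nat.factorial (n - 1) := by
  set a : Fin n := ⟨n - 1, by omega⟩ with ha
  set S := { p : Equiv.Perm (Fin n) × Equiv.Perm (Fin n) |
      ∃ π : Equiv.Perm (Fin n), π a = a ∧ p = (π * σ₁ * π⁻¹, π * σ₂ * π⁻¹) }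
  -- bijection from {π // π a = a} to S
  have key : ∀ π₁ π₂ : Equiv.Perm (Fin n), π₁ a = a → π₂ a = a →
      π₁ * σ₁ * π₁⁻¹ = π₂ * σ₁ * π₂⁻¹ → π₁ * σ₂ * π₁⁻¹ = π₂ * σ₂ * π₂⁻¹ →
      π₁ = π₂ := by
    intro π₁ π₂ h1 h2 e1 e2
    set τ := π₂⁻¹ * π₁ with hτ
    have h2' : π₂⁻¹ a = a := by conv_lhs => rw [← h2]; rw [Equiv.Perm.inv_def, Equiv.symm_apply_apply]
    have hτa : τ a = a := by
      rw [hτ, Equiv.Perm.mul_apply, h1, h2']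
    have hc1 : τ * σ₁ = σ₁ * τ := by
      calc π₂⁻¹ * π₁ * σ₁ = π₂⁻¹ * (π₁ * σ₁ * π₁⁻¹) * π₁ := by group
        _ = π₂⁻¹ * (π₂ * σ₁ * π₂⁻¹) * π₁ := by rw [e1]
        _ = σ₁ * (π₂⁻¹ * π₁) := by group
    have hc2 : τ * σ₂ = σ₂ * τ := by
      calc π₂⁻¹ * π₁ * σ₂ = π₂⁻¹ * (π₁ * σ₂ * π₁⁻¹) * π₁ := by group
        _ = π₂⁻¹ * (π₂ * σ₂ * π₂⁻¹) * π₁ := by rw [e2]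
        _ = σ₂ * (π₂⁻¹ * π₁) := by group
    have hcent : ∀ g ∈ Subgroup.closure ({σ₁, σ₂} : Set (Equiv.Perm (Fin n))),
        τ * g = g * τ := by
      intro g hg
      induction hg using Subgroup.closure_induction with
      | mem x hx =>
        rcases hx with rfl | rfl
        · exact hc1
        · exact hc2
      | one => simp
      | mul x y _ _ hx hy =>
        calc τ * (x * y) = (τ * x) * y := by group
          _ = x * (τ * y) := by rw [hx]; group
          _ = x * y * τ := by rw [hy]; group
      | inv x _ hx =>
        have : x * (τ * x⁻¹) = x * (x⁻¹ * τ) := by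
          rw [show x * (τ * x⁻¹) = (x * τ) * x⁻¹ by group, ← hx]; group
        have := mul_left_cancel this
        rw [this]
    have hfix : ∀ x, τ x = x := by
      intro x
      obtain ⟨g, hg, hgx⟩ := htrans a x
      have h := congrArg (fun p : Equiv.Perm (Fin n) => p a) (hcent g hg)
      simp only [Equiv.Perm.mul_apply] at h
      rw [hgx, hτa, hgx] at h
      exact h
    have hτ1 : τ = 1 := Equiv.ext hfix
    have : π₂⁻¹ * π₁ = 1 := hτ1
    calc π₁ = π₂ * (π₂⁻¹ * π₁) := by group
      _ = π₂ := by rw [this]; group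
  have hbij : S.ncard = Nat.card {π : Equiv.Perm (Fin n) // π a = a} := by
    rw [← Nat.card_coe_set_eq]
    apply Nat.card_congr
    refine Equiv.symm ⟨fun π => ⟨(π.1 * σ₁ * π.1⁻¹, π.1 * σ₂ * π.1⁻¹), π.1, π.2, rfl⟩,
      fun p => ⟨p.2.choose, p.2.choose_spec.1⟩, ?_, ?_⟩
    · intro π
      ext1
      set p : S := ⟨(π.1 * σ₁ * π.1⁻¹, π.1 * σ₂ * π.1⁻¹), π.1, π.2, rfl⟩
      have hs := p.2.choose_spec
      have e := hs.2
      have e1 : p.2.choose * σ₁ * p.2.choose⁻¹ = π.1 * σ₁ * π.1⁻¹ := by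
        have := congrArg Prod.fst e; exact this.symm
      have e2 : p.2.choose * σ₂ * p.2.choose⁻¹ = π.1 * σ₂ * π.1⁻¹ := by
        have := congrArg Prod.snd e; exact this.symm
      exact key _ _ hs.1 π.2 e1 e2
    · intro p
      ext1
      have hs := p.2.choose_spec
      exact hs.2.symm
  rw [hbij]
  -- count permutations fixing a
  have e2 : {π : Equiv.Perm (Fin n) // π a = a} ≃ Equiv.Perm {x : Fin n // x ≠ a} := by
    refine (Equiv.subtypeEquivRight ?_).trans (Equiv.Perm.subtypeEquivSubtypePerm
      (fun x : Fin n => x ≠ a)).symm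
    intro π
    constructor
    · intro h x hx
      push_neg at hx
      subst hx; exact h
    · intro h; exact h a (by simp)
  rw [Nat.card_congr e2, Nat.card_eq_fintype_card, Fintype.card_perm]
  congr 1
  simp [Fintype.card_subtype_compl, Fintype.card_fin]
end

section
/- For n ≥ 1, the number of pairs (σ₁,σ₂) ∈ S_n × S_n such that ⟨σ₁,σ₂⟩ acts transitively on {1,…,n} is divisible by (n-1)!. -/
/-- If a finite group acts freely on an invariant finite set, its cardinality divides
the cardinality of the set. -/
lemma aux_free_dvd {K X : Type*} [Group K] [Finite K] [Finite X]
    (act : K →* Equiv.Perm X) (s : Set X)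
    (hinv : ∀ g : K, ∀ x ∈ s, act g x ∈ s)
    (hfree : ∀ g : K, ∀ x ∈ s, act g x = x → g = 1) :
    Nat.card K ∣ s.ncard := by
  letI : MulAction K s :=
    { smul := fun g x => ⟨act g x, hinv g x x.2⟩
      one_smul := fun x => Subtype.ext (show act 1 ↑x = ↑x by rw [map_one]; rfl)
      mul_smul := fun g h x => Subtype.ext
        (show act (g * h) ↑x = act g (act h ↑x) by rw [map_mul]; rfl) }
  haveI : Finite s := Set.toFinite s |>.to_subtype
  classical
  letI : Fintype s := Fintype.ofFinite s
  letI : Fintype K := Fintype.ofFinite K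
  have hstab : ∀ x : s, MulAction.stabilizer K x = ⊥ := by
    intro x
    ext g
    simp only [MulAction.mem_stabilizer_iff, Subgroup.mem_bot]
    constructor
    · intro hg
      exact hfree g x x.2 (congrArg Subtype.val hg)
    · rintro rfl; exact one_smul K x
  have e := MulAction.selfEquivSigmaOrbitsQuotientStabilizer K s
  letI : Fintype (MulAction.orbitRel.Quotient K s) := Fintype.ofFinite _
  letI : ∀ ω : MulAction.orbitRel.Quotient K s,
      Fintype (K ⧸ MulAction.stabilizer K ω.out) := fun ω => Fintype.ofFinite _
  have hcard : s.ncard = Fintype.card (Σ ω : MulAction.orbitRel.Quotient K s,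
      K ⧸ MulAction.stabilizer K ω.out) := by
    rw [← Nat.card_coe_set_eq, Nat.card_eq_fintype_card, Fintype.card_congr e]
  rw [hcard, Fintype.card_sigma, Nat.card_eq_fintype_card]
  refine Finset.dvd_sum fun ω _ => ?_
  have hq : Fintype.card (K ⧸ MulAction.stabilizer K ω.out) = Fintype.card K := by
    have hL := Subgroup.card_eq_card_quotient_mul_card_subgroup
      (MulAction.stabilizer K ω.out)
    have h1 : Nat.card (MulAction.stabilizer K ω.out) = 1 := by
      rw [hstab ω.out]; exact Subgroup.card_bot
    rw [h1, mul_one] at hL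
    simp only [← Nat.card_eq_fintype_card]
    exact hL.symm
  rw [hq]

theorem stmt3_aux_card_stab (n : ℕ) (hn : 1 ≤ n) (pt : Fin n) :
    Nat.card (MulAction.stabilizer (Equiv.Perm (Fin n)) pt) = Nat.factorial (n - 1) := by
  classical
  have horb : MulAction.orbit (Equiv.Perm (Fin n)) pt = Set.univ := by
    ext x
    simp only [Set.mem_univ, iff_true]
    exact ⟨Equiv.swap pt x, Equiv.swap_apply_left pt x⟩
  have h := MulAction.card_orbit_mul_card_stabilizer_eq_card_group
    (Equiv.Perm (Fin n)) pt
  have h' : Nat.card (MulAction.orbit (Equiv.Perm (Fin n)) pt) *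
      Nat.card (MulAction.stabilizer (Equiv.Perm (Fin n)) pt)
      = Nat.card (Equiv.Perm (Fin n)) := by
    simpa [Nat.card_eq_fintype_card] using h
  have e1 : Nat.card (MulAction.orbit (Equiv.Perm (Fin n)) pt) = n := by
    rw [horb]
    exact (Nat.card_congr (Equiv.Set.univ (Fin n))).trans (by simp)
  have e2 : Nat.card (Equiv.Perm (Fin n)) = n.factorial := by
    simp [Nat.card_eq_fintype_card, Fintype.card_perm]
  rw [e1, e2] at h'
  have hn' : n = (n - 1) + 1 := (Nat.succ_pred_eq_of_pos hn).symm
  have hfac : n.factorial = n * (n - 1).factorial := by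
    conv_lhs => rw [hn']
    rw [Nat.factorial_succ, ← hn']
  rw [hfac] at h'
  exact Nat.eq_of_mul_eq_mul_left (Nat.lt_of_lt_of_le Nat.zero_lt_one hn) h'

/-- `(n-1)!` divides the number of pairs `(σ₁,σ₂)` of permutations
of `{1,…,n}` generating a transitive subgroup. -/
theorem stmt3 (n : ℕ) (hn : 1 ≤ n) :
    Nat.factorial (n - 1) ∣
      Set.ncard { p : Equiv.Perm (Fin n) × Equiv.Perm (Fin n) |
        ∀ x y : Fin n,
          ∃ g ∈ Subgroup.closure ({p.1, p.2} : Set (Equiv.Perm (Fin n))), g x = y } := by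
  classical
  set G := Equiv.Perm (Fin n) with hG
  let pt : Fin n := ⟨0, hn⟩
  let K := MulAction.stabilizer G pt
  -- the conjugation action of K on G × G
  let act : K →* Equiv.Perm (G × G) :=
    { toFun := fun τ =>
        Equiv.prodCongr ((MulAut.conj (τ : G)).toEquiv) ((MulAut.conj (τ : G)).toEquiv)
      map_one' := by ext p <;> simp
      map_mul' := by intro a b; ext p <;> simp [mul_assoc] }
  have hact : ∀ (τ : K) (p : G × G),
      act τ p = ((τ : G) * p.1 * (τ : G)⁻¹, (τ : G) * p.2 * (τ : G)⁻¹) := fun τ p => rfl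
  rw [← stmt3_aux_card_stab n hn pt]
  refine aux_free_dvd act _ ?_ ?_
  · -- invariance
    rintro τ ⟨p₁, p₂⟩ hp x y
    obtain ⟨g, hg, hgxy⟩ := hp ((τ : G)⁻¹ x) ((τ : G)⁻¹ y)
    refine ⟨(τ : G) * g * (τ : G)⁻¹, ?_, ?_⟩
    · rw [hact]
      have himg : ({(τ : G) * p₁ * (τ : G)⁻¹, (τ : G) * p₂ * (τ : G)⁻¹} : Set G)
          = (MulAut.conj (τ : G)).toMonoidHom '' {p₁, p₂} := by
        rw [Set.image_pair]; rfl
      simp only [himg, ← MonoidHom.map_closure]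
      exact Subgroup.mem_map.mpr ⟨g, hg, rfl⟩
    · have : ((τ : G) * g * (τ : G)⁻¹) x = (τ : G) (g ((τ : G)⁻¹ x)) := rfl
      rw [this, hgxy]
      exact Equiv.apply_symm_apply _ y
  · -- freeness
    rintro τ ⟨p₁, p₂⟩ hp hfix
    rw [hact] at hfix
    have h₁' : (τ : G) * p₁ * (τ : G)⁻¹ = p₁ := congrArg Prod.fst hfix
    have h₂' : (τ : G) * p₂ * (τ : G)⁻¹ = p₂ := congrArg Prod.snd hfix
    have h₁ : (τ : G) * p₁ = p₁ * (τ : G) := mul_inv_eq_iff_eq_mul.mp h₁'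
    have h₂ : (τ : G) * p₂ = p₂ * (τ : G) := mul_inv_eq_iff_eq_mul.mp h₂'
    have hcomm : ∀ g ∈ Subgroup.closure ({p₁, p₂} : Set G), (τ : G) * g = g * (τ : G) := by
      intro g hg
      have hsub : ({p₁, p₂} : Set G) ⊆ Subgroup.centralizer {(τ : G)} := by
        rintro x (rfl | rfl)
        · exact Subgroup.mem_centralizer_singleton_iff.mpr h₁.symm
        · exact Subgroup.mem_centralizer_singleton_iff.mpr h₂.symm
      have hmem := (Subgroup.closure_le _).mpr hsub hg
      exact (Subgroup.mem_centralizer_singleton_iff.mp hmem).symm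
    have hτ : ∀ x : Fin n, (τ : G) x = x := by
      intro x
      obtain ⟨g, hg, hgx⟩ := hp pt x
      have hτpt : (τ : G) pt = pt := τ.2
      calc (τ : G) x = (τ : G) (g pt) := by rw [hgx]
        _ = ((τ : G) * g) pt := rfl
        _ = (g * (τ : G)) pt := by rw [hcomm g hg]
        _ = g ((τ : G) pt) := rfl
        _ = g pt := by rw [hτpt]
        _ = x := hgx
    exact Subtype.ext (Equiv.ext hτ)
end
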